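/- Interval Model alignment lemma: any interval $[a, a+d)$ of length $d = 2^j$ (with integers $a \ge 0$) is contained in the union of at most two aligned intervals of length $d$, i.e., intervals of the form $[k d, (k+1)d)$ with $k$ an integer. Consequently, any leasing solution with arbitrary start times can be converted to one with aligned start times at a cost increase of at most a factor of $2$ (each lease is replaced by at most two aligned leases of the same type). -/

import Mathlib

lemma aux_cover (a j : ℕ) :
    Set.Ico a (a + 2 ^ j) ⊆
      Set.Ico (a / 2 ^ j * 2 ^ j) ((a / 2 ^ j + 1) * 2 ^ j) ∪
        Set.Ico ((a / 2 ^ j + 1) * 2 ^ j) ((a / 2 ^ j + 2) * 2 ^ j) := by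
  intro t ht
  obtain ⟨h1, h2⟩ := ht
  have hle : a / 2 ^ j * 2 ^ j ≤ a := Nat.div_mul_le_self a _
  have hlt : a < (a / 2 ^ j + 1) * 2 ^ j := by
    rw [add_mul, one_mul]; exact Nat.lt_div_mul_add (by positivity)
  by_cases h : t < (a / 2 ^ j + 1) * 2 ^ j
  · exact Or.inl ⟨le_trans hle h1, h⟩
  · refine Or.inr ⟨le_of_not_gt h, ?_⟩
    have : t < a + 2 ^ j := h2
    calc t < a + 2 ^ j := h2
      _ ≤ (a / 2 ^ j + 1) * 2 ^ j + 2 ^ j := by omega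
      _ = (a / 2 ^ j + 2) * 2 ^ j := by ring

theorem stmt_12 :
    (∀ a j : ℕ,
      Set.Ico a (a + 2 ^ j) ⊆
        Set.Ico (a / 2 ^ j * 2 ^ j) ((a / 2 ^ j + 1) * 2 ^ j) ∪
          Set.Ico ((a / 2 ^ j + 1) * 2 ^ j) ((a / 2 ^ j + 2) * 2 ^ j)) ∧
    (∀ (N LT : Type) (d : LT → ℕ) (c : LT → ℝ),
      (∀ l, ∃ k : ℕ, d l = 2 ^ k) → (∀ l, 0 ≤ c l) →
      ∀ S : List (N × LT × ℕ),
        ∃ S' : List (N × LT × ℕ),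
          (∀ x ∈ S', d x.2.1 ∣ x.2.2) ∧
          (∀ (v : N) (t : ℕ),
            (∃ x ∈ S, x.1 = v ∧ x.2.2 ≤ t ∧ t < x.2.2 + d x.2.1) →
            (∃ x ∈ S', x.1 = v ∧ x.2.2 ≤ t ∧ t < x.2.2 + d x.2.1)) ∧
          (S'.map (fun x => c x.2.1)).sum ≤ 2 * (S.map (fun x => c x.2.1)).sum) := by
  constructor
  · exact aux_cover
  · intro N LT d c hd hc S
    refine ⟨S.flatMap (fun x => [(x.1, x.2.1, x.2.2 / d x.2.1 * d x.2.1),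
        (x.1, x.2.1, (x.2.2 / d x.2.1 + 1) * d x.2.1)]), ?_, ?_, ?_⟩
    · intro x hx
      simp only [List.mem_flatMap, List.mem_cons, List.mem_singleton] at hx
      obtain ⟨y, _, hy⟩ := hx
      rcases hy with rfl | rfl | h
      · exact Dvd.intro_left _ rfl
      · exact Dvd.intro_left _ rfl
      · simp at h
    · rintro v t ⟨x, hxS, rfl, h1, h2⟩
      obtain ⟨k, hk⟩ := hd x.2.1
      have := aux_cover x.2.2 k (show t ∈ _ by rw [← hk]; exact ⟨h1, h2⟩)
      rw [← hk] at this
      rcases this with ⟨l1, l2⟩ | ⟨l1, l2⟩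
      · refine ⟨(x.1, x.2.1, x.2.2 / d x.2.1 * d x.2.1), ?_, rfl, l1, ?_⟩
        · simp only [List.mem_flatMap]; exact ⟨x, hxS, by simp⟩
        · simpa [add_mul, one_mul] using l2
      · refine ⟨(x.1, x.2.1, (x.2.2 / d x.2.1 + 1) * d x.2.1), ?_, rfl, l1, ?_⟩
        · simp only [List.mem_flatMap]; exact ⟨x, hxS, by simp⟩
        · calc t < (x.2.2 / d x.2.1 + 2) * d x.2.1 := l2
            _ = (x.2.2 / d x.2.1 + 1) * d x.2.1 + d x.2.1 := by ring
    · induction S with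
      | nil => simp
      | cons a S ih =>
        simp only [List.flatMap_cons, List.map_append, List.map_cons, List.map_nil,
          List.sum_append, List.sum_cons, List.sum_nil, add_zero]
        linarith [ih]
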